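/- For every n ≥ 1, the number of permutations of {1,...,n} containing exactly one occurrence of the generalized pattern 12-3 and exactly one occurrence of the generalized pattern 13-2 equals (n² - 7n + 14)·2^(n-3) - 2. -/

import Mathlib

/-- The value of the permutation at position `i` (0-indexed), or 0 if out of range. -/
def permVal {n : ℕ} (π : Equiv.Perm (Fin n)) (i : ℕ) : ℕ :=
  if h : i < n then (π ⟨i, h⟩ : ℕ) else 0

/-- Number of occurrences of the generalized pattern 12-3. -/
def occ12_3 {n : ℕ} (π : Equiv.Perm (Fin n)) : ℕ :=
  ((Finset.range n ×ˢ Finset.range n).filter (fun p =>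
    p.1 + 1 < p.2 ∧ permVal π p.1 < permVal π (p.1 + 1) ∧
      permVal π (p.1 + 1) < permVal π p.2)).card

/-- Number of occurrences of the generalized pattern 13-2. -/
def occ13_2 {n : ℕ} (π : Equiv.Perm (Fin n)) : ℕ :=
  ((Finset.range n ×ˢ Finset.range n).filter (fun p =>
    p.1 + 1 < p.2 ∧ permVal π p.1 < permVal π p.2 ∧
      permVal π p.2 < permVal π (p.1 + 1))).card

/-- Number of occurrences of the generalized pattern 21-3. -/
def occ21_3 {n : ℕ} (π : Equiv.Perm (Fin n)) : ℕ :=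
  ((Finset.range n ×ˢ Finset.range n).filter (fun p =>
    p.1 + 1 < p.2 ∧ permVal π (p.1 + 1) < permVal π p.1 ∧
      permVal π p.1 < permVal π p.2)).card

/-- Number of occurrences of the generalized pattern 23-1. -/
def occ23_1 {n : ℕ} (π : Equiv.Perm (Fin n)) : ℕ :=
  ((Finset.range n ×ˢ Finset.range n).filter (fun p =>
    p.1 + 1 < p.2 ∧ permVal π p.2 < permVal π p.1 ∧
      permVal π p.1 < permVal π (p.1 + 1))).card

/-- Number of occurrences of the generalized pattern 31-2. -/
def occ31_2 {n : ℕ} (π : Equiv.Perm (Fin n)) : ℕ :=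
  ((Finset.range n ×ˢ Finset.range n).filter (fun p =>
    p.1 + 1 < p.2 ∧ permVal π (p.1 + 1) < permVal π p.2 ∧
      permVal π p.2 < permVal π p.1)).card

/-- Number of occurrences of the generalized pattern 32-1. -/
def occ32_1 {n : ℕ} (π : Equiv.Perm (Fin n)) : ℕ :=
  ((Finset.range n ×ˢ Finset.range n).filter (fun p =>
    p.1 + 1 < p.2 ∧ permVal π p.2 < permVal π (p.1 + 1) ∧
      permVal π (p.1 + 1) < permVal π p.1)).card

section aux

open Finset

/-- word finset: functions ℕ→ℕ supported on [0,m) with 1 ≤ w j ≤ m - j -/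
def wd (m : ℕ) : Finset (ℕ → ℕ) :=
  (Fintype.piFinset (fun j : Fin m => Finset.Icc 1 (m - (j : ℕ)))).map
    ⟨fun w j => if h : j < m then w ⟨j, h⟩ else 0, by
      intro a b hab
      funext j
      have := congrFun hab (j : ℕ)
      simpa [j.isLt] using this⟩

lemma mem_wd {m : ℕ} {v : ℕ → ℕ} :
    v ∈ wd m ↔ (∀ j, j < m → 1 ≤ v j ∧ v j ≤ m - j) ∧ (∀ j, m ≤ j → v j = 0) := by
  simp only [wd, mem_map, Function.Embedding.coeFn_mk, Fintype.mem_piFinset]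
  constructor
  · rintro ⟨w, hw, rfl⟩
    constructor
    · intro j hj
      show 1 ≤ (if h : j < m then w ⟨j, h⟩ else 0) ∧ (if h : j < m then w ⟨j, h⟩ else 0) ≤ m - j
      simpa [hj, Finset.mem_Icc] using hw ⟨j, hj⟩
    · intro j hj
      show (if h : j < m then w ⟨j, h⟩ else 0) = 0
      simp [Nat.not_lt.2 hj]
  · rintro ⟨h1, h2⟩
    refine ⟨fun j => v (j : ℕ), fun j => ?_, ?_⟩
    · simpa [Finset.mem_Icc] using h1 j j.isLt
    · funext j
      by_cases h : j < m
      · change (if h : j < m then v j else 0) = v j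
        simp [h]
      · change (if h : j < m then v j else 0) = v j
        simp [h, h2 j (Nat.le_of_not_lt h)]

def stU (m : ℕ) (w : ℕ → ℕ) : ℕ :=
  ∑ j ∈ range (m - 1), if w (j + 1) < w j then w (j + 1) - 1 else 0

def stV (m : ℕ) (w : ℕ → ℕ) : ℕ :=
  ∑ j ∈ range (m - 1), if w (j + 1) < w j then w j - 1 - w (j + 1) else 0

def tl (w : ℕ → ℕ) : ℕ → ℕ := fun j => w (j + 1)

def cns (r : ℕ) (v : ℕ → ℕ) : ℕ → ℕ := fun j => if j = 0 then r else v (j - 1)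

lemma tl_mem {m : ℕ} {w : ℕ → ℕ} (hw : w ∈ wd (m + 1)) : tl w ∈ wd m := by
  rw [mem_wd] at hw ⊢
  obtain ⟨h1, h2⟩ := hw
  constructor
  · intro j hj
    have := h1 (j + 1) (by omega)
    simp only [tl]
    omega
  · intro j hj
    exact h2 (j + 1) (by omega)

lemma cns_mem {m r : ℕ} {v : ℕ → ℕ} (hr1 : 1 ≤ r) (hr2 : r ≤ m + 1) (hv : v ∈ wd m) :
    cns r v ∈ wd (m + 1) := by
  rw [mem_wd] at hv ⊢
  obtain ⟨h1, h2⟩ := hv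
  constructor
  · intro j hj
    rcases Nat.eq_zero_or_pos j with rfl | hj0
    · simpa [cns] using ⟨hr1, by omega⟩
    · have hlt : j - 1 < m := by omega
      have := h1 (j - 1) hlt
      have hne : j ≠ 0 := by omega
      simp only [cns, hne, if_false]
      omega
  · intro j hj
    have hne : j ≠ 0 := by omega
    simp only [cns, hne, if_false]
    exact h2 (j - 1) (by omega)

lemma tl_cns (r : ℕ) (v : ℕ → ℕ) : tl (cns r v) = v := by
  funext j; simp [tl, cns]

lemma cns_tl {w : ℕ → ℕ} : cns (w 0) (tl w) = w := by
  funext j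
  rcases Nat.eq_zero_or_pos j with rfl | hj
  · simp [cns]
  · have : j ≠ 0 := by omega
    simp only [cns, this, if_false, tl]
    congr 1; omega

lemma stU_peel (m : ℕ) (hm : 1 ≤ m) (w : ℕ → ℕ) :
    stU (m + 1) w = (if w 1 < w 0 then w 1 - 1 else 0) + stU m (tl w) := by
  unfold stU
  have h : m + 1 - 1 = (m - 1) + 1 := by omega
  rw [h, Finset.sum_range_succ']
  simp only [tl]
  ring

lemma stV_peel (m : ℕ) (hm : 1 ≤ m) (w : ℕ → ℕ) :
    stV (m + 1) w = (if w 1 < w 0 then w 0 - 1 - w 1 else 0) + stV m (tl w) := by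
  unfold stV
  have h : m + 1 - 1 = (m - 1) + 1 := by omega
  rw [h, Finset.sum_range_succ']
  simp only [tl]
  ring

def cnt (m a b r : ℕ) : ℕ :=
  ((wd m).filter fun w => (stU m w = a ∧ stV m w = b) ∧ w 0 = r).card

def cnt2 (m a b r s : ℕ) : ℕ :=
  ((wd m).filter fun v =>
    (stU m v + (if v 0 < r then v 0 - 1 else 0) = a ∧
     stV m v + (if v 0 < r then r - 1 - v 0 else 0) = b) ∧ v 0 = s).card

/-- boundedness: first letter ≤ U + V + 2 -/
lemma first_le (m : ℕ) (hm : 1 ≤ m) : ∀ w ∈ wd m, w 0 ≤ stU m w + stV m w + 2 := by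
  induction m with
  | zero => omega
  | succ m ih =>
    intro w hw
    rcases Nat.eq_zero_or_pos m with rfl | hm1
    · have := (mem_wd.1 hw).1 0 (by omega)
      omega
    · have hw1 : tl w ∈ wd m := tl_mem hw
      have hb := (mem_wd.1 hw1).1 0 hm1
      have hU := stU_peel m hm1 w
      have hV := stV_peel m hm1 w
      by_cases h : w 1 < w 0
      · have h1 : tl w 0 = w 1 := rfl
        rw [hU, hV]
        simp only [h, if_true]
        omega
      · have := ih hm1 (tl w) hw1
        have h1 : tl w 0 = w 1 := rfl
        rw [hU, hV]
        simp only [h, if_false]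
        omega

lemma cnt2_zero_big {m a b r s : ℕ}
    (h : a + b + 2 < s ∨ m < s) : cnt2 m a b r s = 0 := by
  rw [cnt2, Finset.card_eq_zero, Finset.filter_eq_empty_iff]
  rintro v hv ⟨⟨h1, h2⟩, h3⟩
  rcases Nat.eq_zero_or_pos m with rfl | hm
  · have := (mem_wd.1 hv).2 0 (by omega)
    omega
  · have hb := (mem_wd.1 hv).1 0 hm
    have hL := first_le m hm v hv
    omega

lemma cnt_zero_big {m a b s : ℕ}
    (h : a + b + 2 < s ∨ m < s) : cnt m a b s = 0 := by
  rw [cnt, Finset.card_eq_zero, Finset.filter_eq_empty_iff]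
  rintro v hv ⟨⟨h1, h2⟩, h3⟩
  rcases Nat.eq_zero_or_pos m with rfl | hm
  · have := (mem_wd.1 hv).2 0 (by omega)
    omega
  · have hb := (mem_wd.1 hv).1 0 hm
    have hL := first_le m hm v hv
    omega

/-- master peel identity -/
lemma cnt_peel (m a b r : ℕ) (hm : 1 ≤ m) (hr1 : 1 ≤ r) (hr2 : r ≤ m + 1) :
    cnt (m + 1) a b r = ∑ s ∈ Finset.Icc 1 m, cnt2 m a b r s := by
  rw [cnt]
  have hbij : ((wd (m+1)).filter fun w => (stU (m+1) w = a ∧ stV (m+1) w = b) ∧ w 0 = r).card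
      = ((wd m).filter fun v =>
          (stU m v + (if v 0 < r then v 0 - 1 else 0) = a ∧
           stV m v + (if v 0 < r then r - 1 - v 0 else 0) = b)).card := by
    apply Finset.card_bij (fun w _ => tl w)
    · rintro w hw
      rw [Finset.mem_filter] at hw ⊢
      obtain ⟨hw1, ⟨hU, hV⟩, h0⟩ := hw
      refine ⟨tl_mem hw1, ?_, ?_⟩
      · rw [stU_peel m hm w, h0] at hU
        have h1 : tl w 0 = w 1 := rfl
        rw [h1, ← hU]; ring
      · rw [stV_peel m hm w, h0] at hV
        have h1 : tl w 0 = w 1 := rfl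
        rw [h1, ← hV]; ring
    · rintro w hw w' hw' h
      rw [Finset.mem_filter] at hw hw'
      calc w = cns (w 0) (tl w) := cns_tl.symm
        _ = cns r (tl w) := by rw [hw.2.2]
        _ = cns r (tl w') := by rw [h]
        _ = cns (w' 0) (tl w') := by rw [hw'.2.2]
        _ = w' := cns_tl
    · rintro v hv
      rw [Finset.mem_filter] at hv
      obtain ⟨hv1, hU, hV⟩ := hv
      refine ⟨cns r v, ?_, (tl_cns r v).symm⟩
      rw [Finset.mem_filter]
      have h0 : cns r v 0 = r := by simp [cns]
      have h1 : cns r v 1 = v 0 := by simp [cns]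
      refine ⟨cns_mem hr1 hr2 hv1, ⟨?_, ?_⟩, h0⟩
      · rw [stU_peel m hm (cns r v), h0, h1, tl_cns, ← hU]; ring
      · rw [stV_peel m hm (cns r v), h0, h1, tl_cns, ← hV]; ring
  rw [hbij]
  have H : ∀ v ∈ ((wd m).filter fun u =>
          (stU m u + (if u 0 < r then u 0 - 1 else 0) = a ∧
           stV m u + (if u 0 < r then r - 1 - u 0 else 0) = b)),
      v 0 ∈ Finset.Icc 1 m := by
    intro v hv
    rw [Finset.mem_filter] at hv
    have h2 := (mem_wd.1 hv.1).1 0 hm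
    rw [Nat.sub_zero] at h2
    exact Finset.mem_Icc.2 h2
  rw [Finset.card_eq_sum_card_fiberwise H]
  apply Finset.sum_congr rfl
  intro s _
  rw [cnt2, Finset.filter_filter]

/-- the fibers of cnt_peel are cnt2 -/
lemma cnt2_eq_cnt {m a b r s a' b' : ℕ}
    (h : ∀ u v : ℕ, (u + (if s < r then s - 1 else 0) = a ∧
        v + (if s < r then r - 1 - s else 0) = b) ↔ (u = a' ∧ v = b')) :
    cnt2 m a b r s = cnt m a' b' s := by
  rw [cnt2, cnt]
  congr 1
  apply Finset.filter_congr
  intro v _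
  constructor
  · rintro ⟨⟨h1, h2⟩, h3⟩
    subst h3
    exact ⟨(h _ _).1 ⟨h1, h2⟩, rfl⟩
  · rintro ⟨⟨h1, h2⟩, h3⟩
    subst h3
    exact ⟨(h _ _).2 ⟨h1, h2⟩, rfl⟩

lemma cnt2_eq_zero {m a b r s : ℕ}
    (h : ∀ u v : ℕ, ¬(u + (if s < r then s - 1 else 0) = a ∧
        v + (if s < r then r - 1 - s else 0) = b)) :
    cnt2 m a b r s = 0 := by
  rw [cnt2, Finset.card_eq_zero, Finset.filter_eq_empty_iff]
  rintro v _ ⟨⟨h1, h2⟩, h3⟩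
  subst h3
  exact h _ _ ⟨h1, h2⟩

/-- truncate a sum over Icc 1 m to the first four values -/
lemma sum_trunc (m : ℕ) (f : ℕ → ℕ) (h : ∀ s, 5 ≤ s ∨ m < s → f s = 0) :
    ∑ s ∈ Finset.Icc 1 m, f s = f 1 + f 2 + f 3 + f 4 := by
  have e1 : ∑ s ∈ Finset.Icc 1 m, f s = ∑ s ∈ Finset.Icc 1 (m + 4), f s := by
    apply Finset.sum_subset
    · apply Finset.Icc_subset_Icc_right; omega
    · intro x hx hx2
      rw [Finset.mem_Icc] at hx hx2
      exact h x (by omega)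
  have e2 : f 1 + f 2 + f 3 + f 4 = ∑ s ∈ Finset.Icc 1 4, f s := by
    rw [show (4:ℕ) = 1 + 3 from rfl, Finset.sum_Icc_succ_top (by omega),
      Finset.sum_Icc_succ_top (by omega), Finset.sum_Icc_succ_top (by omega)]
    simp [Finset.Icc_self]
  have e3 : ∑ s ∈ Finset.Icc 1 4, f s = ∑ s ∈ Finset.Icc 1 (m + 4), f s := by
    apply Finset.sum_subset
    · apply Finset.Icc_subset_Icc_right; omega
    · intro x hx hx2
      rw [Finset.mem_Icc] at hx hx2
      exact h x (by omega)
  rw [e1, e2, e3]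

lemma closed_forms (k : ℕ) :
    (cnt (k+3) 0 0 1 : ℚ) = (2:ℚ)^(k+1) ∧
    (cnt (k+3) 0 0 2 : ℚ) = (2:ℚ)^(k+1) ∧
    (cnt (k+3) 0 1 1 : ℚ) = ((k:ℚ)-1)*2^k+1 ∧
    (cnt (k+3) 0 1 2 : ℚ) = ((k:ℚ)-1)*2^k+1 ∧
    (cnt (k+3) 0 1 3 : ℚ) = (2:ℚ)^(k+1)-1 ∧
    (cnt (k+3) 1 0 1 : ℚ) = ((k:ℚ)-1)*2^k+1 ∧
    (cnt (k+3) 1 0 2 : ℚ) = ((k:ℚ)-1)*2^k+1 ∧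
    (cnt (k+3) 1 0 3 : ℚ) = (2:ℚ)^(k+1)-1 ∧
    (cnt (k+3) 1 1 1 : ℚ) = ((k:ℚ)^2-3*(k:ℚ)+4)*2^k/2-2 ∧
    (cnt (k+3) 1 1 2 : ℚ) = ((k:ℚ)^2-3*(k:ℚ)+4)*2^k/2-2 ∧
    (cnt (k+3) 1 1 3 : ℚ) = ((k:ℚ)-2)*2^(k+1)+4 ∧
    (cnt (k+3) 1 1 4 : ℚ) = (2:ℚ)^(k+1)-2 := by
  induction k with
  | zero =>
    refine ⟨?_, ?_, ?_, ?_, ?_, ?_, ?_, ?_, ?_, ?_, ?_, ?_⟩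
    · have h : cnt 3 0 0 1 = 2 := by decide
      rw [h]; norm_num
    · have h : cnt 3 0 0 2 = 2 := by decide
      rw [h]; norm_num
    · have h : cnt 3 0 1 1 = 0 := by decide
      rw [h]; norm_num
    · have h : cnt 3 0 1 2 = 0 := by decide
      rw [h]; norm_num
    · have h : cnt 3 0 1 3 = 1 := by decide
      rw [h]; norm_num
    · have h : cnt 3 1 0 1 = 0 := by decide
      rw [h]; norm_num
    · have h : cnt 3 1 0 2 = 0 := by decide
      rw [h]; norm_num
    · have h : cnt 3 1 0 3 = 1 := by decide
      rw [h]; norm_num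
    · have h : cnt 3 1 1 1 = 0 := by decide
      rw [h]; norm_num
    · have h : cnt 3 1 1 2 = 0 := by decide
      rw [h]; norm_num
    · have h : cnt 3 1 1 3 = 0 := by decide
      rw [h]; norm_num
    · have h : cnt 3 1 1 4 = 0 := by decide
      rw [h]; norm_num
  | succ k ih =>
    obtain ⟨q1, q2, y1, y2, u3, z1, z2, v3, x1, x2, e3, e4⟩ := ih
    refine ⟨?_, ?_, ?_, ?_, ?_, ?_, ?_, ?_, ?_, ?_, ?_, ?_⟩
    · have t : cnt (k+3+1) 0 0 1 = cnt (k+3) 0 0 1 + cnt (k+3) 0 0 2 + 0 + 0 := by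
        rw [cnt_peel (k+3) 0 0 1 (by omega) (by omega) (by omega),
        sum_trunc _ _ (fun s hs => cnt2_zero_big (by omega)),
        cnt2_eq_cnt (m := k+3) (a := 0) (b := 0) (r := 1) (s := 1) (a' := 0) (b' := 0) (by intro u v; simp <;> omega),
        cnt2_eq_cnt (m := k+3) (a := 0) (b := 0) (r := 1) (s := 2) (a' := 0) (b' := 0) (by intro u v; simp <;> omega),
        cnt2_eq_cnt (m := k+3) (a := 0) (b := 0) (r := 1) (s := 3) (a' := 0) (b' := 0) (by intro u v; simp <;> omega),
        cnt2_eq_cnt (m := k+3) (a := 0) (b := 0) (r := 1) (s := 4) (a' := 0) (b' := 0) (by intro u v; simp <;> omega),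
        cnt_zero_big (m := k+3) (a := 0) (b := 0) (s := 3) (by omega),
        cnt_zero_big (m := k+3) (a := 0) (b := 0) (s := 4) (by omega)]
      rw [show k+1+3 = k+3+1 from rfl, t]
      push_cast
      rw [q1, q2]
      push_cast
      ring
    · have t : cnt (k+3+1) 0 0 2 = cnt (k+3) 0 0 1 + cnt (k+3) 0 0 2 + 0 + 0 := by
        rw [cnt_peel (k+3) 0 0 2 (by omega) (by omega) (by omega),
        sum_trunc _ _ (fun s hs => cnt2_zero_big (by omega)),
        cnt2_eq_cnt (m := k+3) (a := 0) (b := 0) (r := 2) (s := 1) (a' := 0) (b' := 0) (by intro u v; simp <;> omega),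
        cnt2_eq_cnt (m := k+3) (a := 0) (b := 0) (r := 2) (s := 2) (a' := 0) (b' := 0) (by intro u v; simp <;> omega),
        cnt2_eq_cnt (m := k+3) (a := 0) (b := 0) (r := 2) (s := 3) (a' := 0) (b' := 0) (by intro u v; simp <;> omega),
        cnt2_eq_cnt (m := k+3) (a := 0) (b := 0) (r := 2) (s := 4) (a' := 0) (b' := 0) (by intro u v; simp <;> omega),
        cnt_zero_big (m := k+3) (a := 0) (b := 0) (s := 3) (by omega),
        cnt_zero_big (m := k+3) (a := 0) (b := 0) (s := 4) (by omega)]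
      rw [show k+1+3 = k+3+1 from rfl, t]
      push_cast
      rw [q1, q2]
      push_cast
      ring
    · have t : cnt (k+3+1) 0 1 1 = cnt (k+3) 0 1 1 + cnt (k+3) 0 1 2 + cnt (k+3) 0 1 3 + 0 := by
        rw [cnt_peel (k+3) 0 1 1 (by omega) (by omega) (by omega),
        sum_trunc _ _ (fun s hs => cnt2_zero_big (by omega)),
        cnt2_eq_cnt (m := k+3) (a := 0) (b := 1) (r := 1) (s := 1) (a' := 0) (b' := 1) (by intro u v; simp <;> omega),
        cnt2_eq_cnt (m := k+3) (a := 0) (b := 1) (r := 1) (s := 2) (a' := 0) (b' := 1) (by intro u v; simp <;> omega),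
        cnt2_eq_cnt (m := k+3) (a := 0) (b := 1) (r := 1) (s := 3) (a' := 0) (b' := 1) (by intro u v; simp <;> omega),
        cnt2_eq_cnt (m := k+3) (a := 0) (b := 1) (r := 1) (s := 4) (a' := 0) (b' := 1) (by intro u v; simp <;> omega),
        cnt_zero_big (m := k+3) (a := 0) (b := 1) (s := 4) (by omega)]
      rw [show k+1+3 = k+3+1 from rfl, t]
      push_cast
      rw [u3, y1, y2]
      push_cast
      ring
    · have t : cnt (k+3+1) 0 1 2 = cnt (k+3) 0 1 1 + cnt (k+3) 0 1 2 + cnt (k+3) 0 1 3 + 0 := by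
        rw [cnt_peel (k+3) 0 1 2 (by omega) (by omega) (by omega),
        sum_trunc _ _ (fun s hs => cnt2_zero_big (by omega)),
        cnt2_eq_cnt (m := k+3) (a := 0) (b := 1) (r := 2) (s := 1) (a' := 0) (b' := 1) (by intro u v; simp <;> omega),
        cnt2_eq_cnt (m := k+3) (a := 0) (b := 1) (r := 2) (s := 2) (a' := 0) (b' := 1) (by intro u v; simp <;> omega),
        cnt2_eq_cnt (m := k+3) (a := 0) (b := 1) (r := 2) (s := 3) (a' := 0) (b' := 1) (by intro u v; simp <;> omega),
        cnt2_eq_cnt (m := k+3) (a := 0) (b := 1) (r := 2) (s := 4) (a' := 0) (b' := 1) (by intro u v; simp <;> omega),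
        cnt_zero_big (m := k+3) (a := 0) (b := 1) (s := 4) (by omega)]
      rw [show k+1+3 = k+3+1 from rfl, t]
      push_cast
      rw [u3, y1, y2]
      push_cast
      ring
    · have t : cnt (k+3+1) 0 1 3 = cnt (k+3) 0 0 1 + 0 + cnt (k+3) 0 1 3 + 0 := by
        rw [cnt_peel (k+3) 0 1 3 (by omega) (by omega) (by omega),
        sum_trunc _ _ (fun s hs => cnt2_zero_big (by omega)),
        cnt2_eq_cnt (m := k+3) (a := 0) (b := 1) (r := 3) (s := 1) (a' := 0) (b' := 0) (by intro u v; simp <;> omega),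
        cnt2_eq_zero (m := k+3) (a := 0) (b := 1) (r := 3) (s := 2) (by intro u v; simp <;> omega),
        cnt2_eq_cnt (m := k+3) (a := 0) (b := 1) (r := 3) (s := 3) (a' := 0) (b' := 1) (by intro u v; simp <;> omega),
        cnt2_eq_cnt (m := k+3) (a := 0) (b := 1) (r := 3) (s := 4) (a' := 0) (b' := 1) (by intro u v; simp <;> omega),
        cnt_zero_big (m := k+3) (a := 0) (b := 1) (s := 4) (by omega)]
      rw [show k+1+3 = k+3+1 from rfl, t]
      push_cast
      rw [q1, u3]
      push_cast
      ring
    · have t : cnt (k+3+1) 1 0 1 = cnt (k+3) 1 0 1 + cnt (k+3) 1 0 2 + cnt (k+3) 1 0 3 + 0 := by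
        rw [cnt_peel (k+3) 1 0 1 (by omega) (by omega) (by omega),
        sum_trunc _ _ (fun s hs => cnt2_zero_big (by omega)),
        cnt2_eq_cnt (m := k+3) (a := 1) (b := 0) (r := 1) (s := 1) (a' := 1) (b' := 0) (by intro u v; simp <;> omega),
        cnt2_eq_cnt (m := k+3) (a := 1) (b := 0) (r := 1) (s := 2) (a' := 1) (b' := 0) (by intro u v; simp <;> omega),
        cnt2_eq_cnt (m := k+3) (a := 1) (b := 0) (r := 1) (s := 3) (a' := 1) (b' := 0) (by intro u v; simp <;> omega),
        cnt2_eq_cnt (m := k+3) (a := 1) (b := 0) (r := 1) (s := 4) (a' := 1) (b' := 0) (by intro u v; simp <;> omega),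
        cnt_zero_big (m := k+3) (a := 1) (b := 0) (s := 4) (by omega)]
      rw [show k+1+3 = k+3+1 from rfl, t]
      push_cast
      rw [v3, z1, z2]
      push_cast
      ring
    · have t : cnt (k+3+1) 1 0 2 = cnt (k+3) 1 0 1 + cnt (k+3) 1 0 2 + cnt (k+3) 1 0 3 + 0 := by
        rw [cnt_peel (k+3) 1 0 2 (by omega) (by omega) (by omega),
        sum_trunc _ _ (fun s hs => cnt2_zero_big (by omega)),
        cnt2_eq_cnt (m := k+3) (a := 1) (b := 0) (r := 2) (s := 1) (a' := 1) (b' := 0) (by intro u v; simp <;> omega),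
        cnt2_eq_cnt (m := k+3) (a := 1) (b := 0) (r := 2) (s := 2) (a' := 1) (b' := 0) (by intro u v; simp <;> omega),
        cnt2_eq_cnt (m := k+3) (a := 1) (b := 0) (r := 2) (s := 3) (a' := 1) (b' := 0) (by intro u v; simp <;> omega),
        cnt2_eq_cnt (m := k+3) (a := 1) (b := 0) (r := 2) (s := 4) (a' := 1) (b' := 0) (by intro u v; simp <;> omega),
        cnt_zero_big (m := k+3) (a := 1) (b := 0) (s := 4) (by omega)]
      rw [show k+1+3 = k+3+1 from rfl, t]
      push_cast
      rw [v3, z1, z2]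
      push_cast
      ring
    · have t : cnt (k+3+1) 1 0 3 = 0 + cnt (k+3) 0 0 2 + cnt (k+3) 1 0 3 + 0 := by
        rw [cnt_peel (k+3) 1 0 3 (by omega) (by omega) (by omega),
        sum_trunc _ _ (fun s hs => cnt2_zero_big (by omega)),
        cnt2_eq_zero (m := k+3) (a := 1) (b := 0) (r := 3) (s := 1) (by intro u v; simp <;> omega),
        cnt2_eq_cnt (m := k+3) (a := 1) (b := 0) (r := 3) (s := 2) (a' := 0) (b' := 0) (by intro u v; simp <;> omega),
        cnt2_eq_cnt (m := k+3) (a := 1) (b := 0) (r := 3) (s := 3) (a' := 1) (b' := 0) (by intro u v; simp <;> omega),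
        cnt2_eq_cnt (m := k+3) (a := 1) (b := 0) (r := 3) (s := 4) (a' := 1) (b' := 0) (by intro u v; simp <;> omega),
        cnt_zero_big (m := k+3) (a := 1) (b := 0) (s := 4) (by omega)]
      rw [show k+1+3 = k+3+1 from rfl, t]
      push_cast
      rw [q2, v3]
      push_cast
      ring
    · have t : cnt (k+3+1) 1 1 1 = cnt (k+3) 1 1 1 + cnt (k+3) 1 1 2 + cnt (k+3) 1 1 3 + cnt (k+3) 1 1 4 := by
        rw [cnt_peel (k+3) 1 1 1 (by omega) (by omega) (by omega),
        sum_trunc _ _ (fun s hs => cnt2_zero_big (by omega)),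
        cnt2_eq_cnt (m := k+3) (a := 1) (b := 1) (r := 1) (s := 1) (a' := 1) (b' := 1) (by intro u v; simp <;> omega),
        cnt2_eq_cnt (m := k+3) (a := 1) (b := 1) (r := 1) (s := 2) (a' := 1) (b' := 1) (by intro u v; simp <;> omega),
        cnt2_eq_cnt (m := k+3) (a := 1) (b := 1) (r := 1) (s := 3) (a' := 1) (b' := 1) (by intro u v; simp <;> omega),
        cnt2_eq_cnt (m := k+3) (a := 1) (b := 1) (r := 1) (s := 4) (a' := 1) (b' := 1) (by intro u v; simp <;> omega)]
      rw [show k+1+3 = k+3+1 from rfl, t]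
      push_cast
      rw [e3, e4, x1, x2]
      push_cast
      ring
    · have t : cnt (k+3+1) 1 1 2 = cnt (k+3) 1 1 1 + cnt (k+3) 1 1 2 + cnt (k+3) 1 1 3 + cnt (k+3) 1 1 4 := by
        rw [cnt_peel (k+3) 1 1 2 (by omega) (by omega) (by omega),
        sum_trunc _ _ (fun s hs => cnt2_zero_big (by omega)),
        cnt2_eq_cnt (m := k+3) (a := 1) (b := 1) (r := 2) (s := 1) (a' := 1) (b' := 1) (by intro u v; simp <;> omega),
        cnt2_eq_cnt (m := k+3) (a := 1) (b := 1) (r := 2) (s := 2) (a' := 1) (b' := 1) (by intro u v; simp <;> omega),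
        cnt2_eq_cnt (m := k+3) (a := 1) (b := 1) (r := 2) (s := 3) (a' := 1) (b' := 1) (by intro u v; simp <;> omega),
        cnt2_eq_cnt (m := k+3) (a := 1) (b := 1) (r := 2) (s := 4) (a' := 1) (b' := 1) (by intro u v; simp <;> omega)]
      rw [show k+1+3 = k+3+1 from rfl, t]
      push_cast
      rw [e3, e4, x1, x2]
      push_cast
      ring
    · have t : cnt (k+3+1) 1 1 3 = cnt (k+3) 1 0 1 + cnt (k+3) 0 1 2 + cnt (k+3) 1 1 3 + cnt (k+3) 1 1 4 := by
        rw [cnt_peel (k+3) 1 1 3 (by omega) (by omega) (by omega),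
        sum_trunc _ _ (fun s hs => cnt2_zero_big (by omega)),
        cnt2_eq_cnt (m := k+3) (a := 1) (b := 1) (r := 3) (s := 1) (a' := 1) (b' := 0) (by intro u v; simp <;> omega),
        cnt2_eq_cnt (m := k+3) (a := 1) (b := 1) (r := 3) (s := 2) (a' := 0) (b' := 1) (by intro u v; simp <;> omega),
        cnt2_eq_cnt (m := k+3) (a := 1) (b := 1) (r := 3) (s := 3) (a' := 1) (b' := 1) (by intro u v; simp <;> omega),
        cnt2_eq_cnt (m := k+3) (a := 1) (b := 1) (r := 3) (s := 4) (a' := 1) (b' := 1) (by intro u v; simp <;> omega)]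
      rw [show k+1+3 = k+3+1 from rfl, t]
      push_cast
      rw [e3, e4, y2, z1]
      push_cast
      ring
    · have t : cnt (k+3+1) 1 1 4 = 0 + cnt (k+3) 0 0 2 + 0 + cnt (k+3) 1 1 4 := by
        rw [cnt_peel (k+3) 1 1 4 (by omega) (by omega) (by omega),
        sum_trunc _ _ (fun s hs => cnt2_zero_big (by omega)),
        cnt2_eq_zero (m := k+3) (a := 1) (b := 1) (r := 4) (s := 1) (by intro u v; simp <;> omega),
        cnt2_eq_cnt (m := k+3) (a := 1) (b := 1) (r := 4) (s := 2) (a' := 0) (b' := 0) (by intro u v; simp <;> omega),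
        cnt2_eq_zero (m := k+3) (a := 1) (b := 1) (r := 4) (s := 3) (by intro u v; simp <;> omega),
        cnt2_eq_cnt (m := k+3) (a := 1) (b := 1) (r := 4) (s := 4) (a' := 1) (b' := 1) (by intro u v; simp <;> omega)]
      rw [show k+1+3 = k+3+1 from rfl, t]
      push_cast
      rw [e4, q2]
      push_cast
      ring

def codeF {n : ℕ} (π : Equiv.Perm (Fin n)) : ℕ → ℕ := fun i =>
  if i < n then ((Finset.range n).filter fun j => i ≤ j ∧ permVal π i ≤ permVal π j).card else 0

section codeprops

variable {n : ℕ} (π : Equiv.Perm (Fin n))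

lemma pv_lt {i : ℕ} (h : i < n) : permVal π i < n := by
  rw [permVal, dif_pos h]
  exact (π ⟨i, h⟩).isLt

lemma pv_inj {i j : ℕ} (hi : i < n) (hj : j < n) (h : permVal π i = permVal π j) : i = j := by
  rw [permVal, permVal, dif_pos hi, dif_pos hj] at h
  have := π.injective (Fin.ext h)
  exact congrArg Fin.val this

/-- the splitting lemma: the code at i counts i itself plus strictly-later strictly-bigger -/
lemma code_split {i : ℕ} (hi : i < n) :
    codeF π i = 1 + ((Finset.range n).filter fun j => i < j ∧ permVal π i < permVal π j).card := by
  rw [codeF, if_pos hi]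
  have hmem : i ∈ (Finset.range n).filter fun j => i ≤ j ∧ permVal π i ≤ permVal π j := by
    simp [Finset.mem_range, hi]
  have herase : ((Finset.range n).filter fun j => i ≤ j ∧ permVal π i ≤ permVal π j).erase i
      = (Finset.range n).filter fun j => i < j ∧ permVal π i < permVal π j := by
    ext j
    simp only [Finset.mem_erase, Finset.mem_filter, Finset.mem_range]
    constructor
    · rintro ⟨hne, hj, hij, hpv⟩
      refine ⟨hj, by omega, ?_⟩
      rcases Nat.lt_or_ge (permVal π i) (permVal π j) with h | h
      · exact h
      · exact absurd (pv_inj π hi hj (by omega)) (Ne.symm hne)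
    · rintro ⟨hj, hij, hpv⟩
      exact ⟨by omega, hj, by omega, by omega⟩
  rw [← herase, ← Finset.card_erase_add_one hmem]
  ring

lemma code_mem : codeF π ∈ wd n := by
  rw [mem_wd]
  constructor
  · intro i hi
    constructor
    · rw [code_split π hi]; omega
    · rw [codeF, if_pos hi]
      calc ((Finset.range n).filter fun j => i ≤ j ∧ permVal π i ≤ permVal π j).card
          ≤ ((Finset.range n).filter fun j => i ≤ j).card := by
            apply Finset.card_le_card
            intro j hj
            rw [Finset.mem_filter] at hj ⊢
            exact ⟨hj.1, hj.2.1⟩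
        _ = (Finset.Ico i n).card := by
            congr 1
            ext j
            simp only [Finset.mem_filter, Finset.mem_range, Finset.mem_Ico]
            omega
        _ = n - i := Nat.card_Ico i n
  · intro i hi
    rw [codeF, if_neg (by omega)]

/-- ascent iff code drops -/
lemma code_ascent {i : ℕ} (hi : i + 1 < n) (h : permVal π i < permVal π (i + 1)) :
    codeF π (i + 1) < codeF π i := by
  have h1 : codeF π i = 1 +
      ((Finset.range n).filter fun j => i < j ∧ permVal π i < permVal π j).card :=
    code_split π (by omega)
  have h2 : codeF π (i + 1) =
      ((Finset.range n).filter fun j => i + 1 ≤ j ∧ permVal π (i+1) ≤ permVal π j).card := by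
    rw [codeF, if_pos hi]
  have hsub : (Finset.range n).filter (fun j => i + 1 ≤ j ∧ permVal π (i+1) ≤ permVal π j)
      ⊆ (Finset.range n).filter fun j => i < j ∧ permVal π i < permVal π j := by
    intro j hj
    rw [Finset.mem_filter] at hj ⊢
    exact ⟨hj.1, by omega, by omega⟩
  have hcard := Finset.card_le_card hsub
  omega

lemma code_descent {i : ℕ} (hi : i + 1 < n) (h : permVal π (i + 1) < permVal π i) :
    codeF π i ≤ codeF π (i + 1) := by
  rw [codeF, codeF, if_pos (by omega : i < n), if_pos hi]
  apply Finset.card_le_card_of_injOn (fun j => if j = i then i + 1 else j)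
  · intro j hj
    simp only [Finset.mem_coe, Finset.mem_filter, Finset.mem_range] at hj ⊢
    obtain ⟨hj1, hj2, hj3⟩ := hj
    by_cases hji : j = i
    · subst hji
      simp only [if_pos rfl]
      exact ⟨hi, le_refl _, le_refl _⟩
    · rw [if_neg hji]
      refine ⟨hj1, by omega, by omega⟩
  · intro a ha b hb hab
    dsimp only at hab
    rw [Finset.mem_coe, Finset.mem_filter] at ha hb
    by_cases ha1 : a = i <;> by_cases hb1 : b = i
    · rw [ha1, hb1]
    · rw [if_pos ha1, if_neg hb1] at hab
      exfalso
      have : b = i + 1 := by omega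
      subst this
      have := hb.2.2
      omega
    · rw [if_neg ha1, if_pos hb1] at hab
      exfalso
      have : a = i + 1 := by omega
      subst this
      have := ha.2.2
      omega
    · rwa [if_neg ha1, if_neg hb1] at hab

end codeprops
section occid

variable {n : ℕ} (π : Equiv.Perm (Fin n))

lemma occ_sum (q : ℕ → ℕ → Prop) [∀ i j, Decidable (q i j)] :
    ((Finset.range n ×ˢ Finset.range n).filter (fun p => q p.1 p.2)).card
      = ∑ i ∈ Finset.range n, ((Finset.range n).filter fun j => q i j).card := by
  rw [Finset.card_filter, Finset.sum_product]
  apply Finset.sum_congr rfl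
  intro i _
  rw [Finset.card_filter]

lemma K12_eq {i : ℕ} (hi : i + 1 < n) :
    ((Finset.range n).filter fun j =>
        i + 1 < j ∧ permVal π i < permVal π (i + 1) ∧ permVal π (i + 1) < permVal π j).card
      = if codeF π (i + 1) < codeF π i then codeF π (i + 1) - 1 else 0 := by
  rcases Nat.lt_or_ge (permVal π i) (permVal π (i + 1)) with hasc | hdesc
  · rw [if_pos (code_ascent π hi hasc)]
    have h2 := code_split π hi
    have he : (Finset.range n).filter (fun j =>
          i + 1 < j ∧ permVal π i < permVal π (i + 1) ∧ permVal π (i + 1) < permVal π j)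
        = (Finset.range n).filter fun j => i + 1 < j ∧ permVal π (i + 1) < permVal π j := by
      apply Finset.filter_congr
      intro j _
      tauto
    rw [he, ← Nat.add_sub_cancel_left 1
      ((Finset.range n).filter fun j => i + 1 < j ∧ permVal π (i + 1) < permVal π j).card,
      ← h2]
  · have hne : permVal π (i + 1) ≠ permVal π i := fun h => by
      have := pv_inj π (by omega) (by omega) h
      omega
    have hd : permVal π (i + 1) < permVal π i := by omega
    rw [if_neg (by have := code_descent π hi hd; omega)]
    rw [Finset.card_eq_zero, Finset.filter_eq_empty_iff]
    rintro j _ ⟨h1, h2, h3⟩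
    omega

lemma K13_eq {i : ℕ} (hi : i + 1 < n) :
    ((Finset.range n).filter fun j =>
        i + 1 < j ∧ permVal π i < permVal π j ∧ permVal π j < permVal π (i + 1)).card
      = if codeF π (i + 1) < codeF π i then codeF π i - 1 - codeF π (i + 1) else 0 := by
  rcases Nat.lt_or_ge (permVal π i) (permVal π (i + 1)) with hasc | hdesc
  · -- ascent: code i = 1 + code (i+1) + K13
    have h1 := code_split π (show i < n by omega)
    -- split the set B := {j : i < j ∧ pv i < pv j} by pv (i+1) ≤ pv j
    have hsplit := Finset.card_filter_add_card_filter_not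
      (s := (Finset.range n).filter fun j => i < j ∧ permVal π i < permVal π j)
      (p := fun j => permVal π (i + 1) ≤ permVal π j)
    simp only [Finset.filter_filter, not_le] at hsplit
    have hB1 : ((Finset.range n).filter fun j =>
          (i < j ∧ permVal π i < permVal π j) ∧ permVal π (i + 1) ≤ permVal π j)
        = (Finset.range n).filter fun j => i + 1 ≤ j ∧ permVal π (i + 1) ≤ permVal π j := by
      ext j
      simp only [Finset.mem_filter, Finset.mem_range]
      constructor
      · rintro ⟨hj, ⟨h2, h3⟩, h4⟩
        exact ⟨hj, by omega, h4⟩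
      · rintro ⟨hj, h2, h3⟩
        exact ⟨hj, ⟨by omega, by omega⟩, h3⟩
    have hB2 : ((Finset.range n).filter fun j =>
          (i < j ∧ permVal π i < permVal π j) ∧ permVal π j < permVal π (i + 1))
        = (Finset.range n).filter fun j =>
          i + 1 < j ∧ permVal π i < permVal π j ∧ permVal π j < permVal π (i + 1) := by
      ext j
      simp only [Finset.mem_filter, Finset.mem_range]
      constructor
      · rintro ⟨hj, ⟨h2, h3⟩, h4⟩
        refine ⟨hj, ?_, h3, h4⟩
        rcases Nat.lt_or_ge (i + 1) j with h | h
        · exact h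
        · exfalso
          have : j = i + 1 := by omega
          subst this
          omega
      · rintro ⟨hj, h2, h3, h4⟩
        exact ⟨hj, ⟨by omega, h3⟩, h4⟩
    rw [hB1, hB2] at hsplit
    have hc1 : codeF π (i + 1) =
        ((Finset.range n).filter fun j => i + 1 ≤ j ∧ permVal π (i+1) ≤ permVal π j).card := by
      rw [codeF, if_pos hi]
    rw [if_pos (code_ascent π hi hasc)]
    omega
  · have hne : permVal π (i + 1) ≠ permVal π i := fun h => by
      have := pv_inj π (by omega) (by omega) h
      omega
    have hd : permVal π (i + 1) < permVal π i := by omega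
    rw [if_neg (by have := code_descent π hi hd; omega)]
    rw [Finset.card_eq_zero, Finset.filter_eq_empty_iff]
    rintro j _ ⟨h1, h2, h3⟩
    omega

lemma occ12_eq (hn : 1 ≤ n) : occ12_3 π = stU n (codeF π) := by
  rw [occ12_3, occ_sum (q := fun i j => i + 1 < j ∧ permVal π i < permVal π (i + 1) ∧
    permVal π (i + 1) < permVal π j), stU]
  have hlast : ∀ i ∈ Finset.range n, i ∉ Finset.range (n - 1) →
      ((Finset.range n).filter fun j =>
        i + 1 < j ∧ permVal π i < permVal π (i + 1) ∧ permVal π (i + 1) < permVal π j).card = 0 := by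
    intro i hi hi2
    rw [Finset.mem_range] at hi hi2
    rw [Finset.card_eq_zero, Finset.filter_eq_empty_iff]
    rintro j hj ⟨h1, h2, h3⟩
    rw [Finset.mem_range] at hj
    omega
  rw [← Finset.sum_subset (Finset.range_subset_range.2 (by omega : n - 1 ≤ n)) hlast]
  apply Finset.sum_congr rfl
  intro i hi
  rw [Finset.mem_range] at hi
  exact K12_eq π (by omega)

lemma occ13_eq (hn : 1 ≤ n) : occ13_2 π = stV n (codeF π) := by
  rw [occ13_2, occ_sum (q := fun i j => i + 1 < j ∧ permVal π i < permVal π j ∧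
    permVal π j < permVal π (i + 1)), stV]
  have hlast : ∀ i ∈ Finset.range n, i ∉ Finset.range (n - 1) →
      ((Finset.range n).filter fun j =>
        i + 1 < j ∧ permVal π i < permVal π j ∧ permVal π j < permVal π (i + 1)).card = 0 := by
    intro i hi hi2
    rw [Finset.mem_range] at hi hi2
    rw [Finset.card_eq_zero, Finset.filter_eq_empty_iff]
    rintro j hj ⟨h1, h2, h3⟩
    rw [Finset.mem_range] at hj
    omega
  rw [← Finset.sum_subset (Finset.range_subset_range.2 (by omega : n - 1 ≤ n)) hlast]
  apply Finset.sum_congr rfl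
  intro i hi
  rw [Finset.mem_range] at hi
  exact K13_eq π (by omega)

end occid

section inj

variable {n : ℕ}

/-- global value-count identity -/
lemma code_identity (π : Equiv.Perm (Fin n)) {i : ℕ} (hi : i < n) :
    codeF π i + ((Finset.range n).filter fun k =>
        k < i ∧ permVal π i < permVal π k).card + permVal π i = n := by
  -- total count of positions with value ≥ pv i equals n - pv i
  have htot : ((Finset.range n).filter fun j => permVal π i ≤ permVal π j).card
      = n - permVal π i := by
    rw [show n - permVal π i = (Finset.Ico (permVal π i) n).card from (Nat.card_Ico _ _).symm]
    apply Finset.card_bij (fun j _ => permVal π j)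
    · intro j hj
      rw [Finset.mem_filter, Finset.mem_range] at hj
      rw [Finset.mem_Ico]
      exact ⟨hj.2, pv_lt π hj.1⟩
    · intro a ha b hb hab
      rw [Finset.mem_filter, Finset.mem_range] at ha hb
      exact pv_inj π ha.1 hb.1 hab
    · intro v hv
      rw [Finset.mem_Ico] at hv
      refine ⟨(π.symm ⟨v, hv.2⟩ : ℕ), ?_, ?_⟩
      · have h1 : ((π.symm ⟨v, hv.2⟩ : Fin n) : ℕ) < n := (π.symm ⟨v, hv.2⟩).isLt
        have h2 : permVal π ((π.symm ⟨v, hv.2⟩ : Fin n) : ℕ) = v := by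
          rw [permVal, dif_pos h1]
          have : (⟨((π.symm ⟨v, hv.2⟩ : Fin n) : ℕ), h1⟩ : Fin n) = π.symm ⟨v, hv.2⟩ := by
            apply Fin.ext
            rfl
          rw [this, Equiv.apply_symm_apply]
        rw [Finset.mem_filter, Finset.mem_range]
        exact ⟨h1, by omega⟩
      · have h1 : ((π.symm ⟨v, hv.2⟩ : Fin n) : ℕ) < n := (π.symm ⟨v, hv.2⟩).isLt
        rw [permVal, dif_pos h1]
        have : (⟨((π.symm ⟨v, hv.2⟩ : Fin n) : ℕ), h1⟩ : Fin n) = π.symm ⟨v, hv.2⟩ := by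
          apply Fin.ext
          rfl
        rw [this, Equiv.apply_symm_apply]
  -- split into k < i and k ≥ i parts
  have hsplit := Finset.card_filter_add_card_filter_not
    (s := (Finset.range n).filter fun j => permVal π i ≤ permVal π j)
    (p := fun j => j < i)
  simp only [Finset.filter_filter, not_lt] at hsplit
  have hA : ((Finset.range n).filter fun j => permVal π i ≤ permVal π j ∧ j < i)
      = (Finset.range n).filter fun k => k < i ∧ permVal π i < permVal π k := by
    ext j
    simp only [Finset.mem_filter, Finset.mem_range]
    constructor
    · rintro ⟨hj, h1, h2⟩
      refine ⟨hj, h2, ?_⟩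
      rcases Nat.lt_or_ge (permVal π i) (permVal π j) with h | h
      · exact h
      · exfalso
        have := pv_inj π hi hj (by omega)
        omega
    · rintro ⟨hj, h1, h2⟩
      exact ⟨hj, by omega, h1⟩
  have hB : ((Finset.range n).filter fun j => permVal π i ≤ permVal π j ∧ i ≤ j)
      = (Finset.range n).filter fun j => i ≤ j ∧ permVal π i ≤ permVal π j := by
    ext j
    simp only [Finset.mem_filter]
    tauto
  rw [hA, hB] at hsplit
  have hc : codeF π i
      = ((Finset.range n).filter fun j => i ≤ j ∧ permVal π i ≤ permVal π j).card := by
    rw [codeF, if_pos hi]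
  have hpv := pv_lt π hi
  omega

/-- strict monotonicity helper for injectivity -/
lemma code_strict (π : Equiv.Perm (Fin n)) {i u v : ℕ} (hu : u < n) (hv : v < n)
    (huv : u < v) (hvnot : ∀ k, k < i → permVal π k ≠ v) :
    ((Finset.range n).filter fun k => k < i ∧ u < permVal π k).card + u
      < ((Finset.range n).filter fun k => k < i ∧ v < permVal π k).card + v := by
  have hsplit := Finset.card_filter_add_card_filter_not
    (s := (Finset.range n).filter fun k => k < i ∧ u < permVal π k)
    (p := fun k => v < permVal π k)
  simp only [Finset.filter_filter, not_lt] at hsplit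
  have hA : ((Finset.range n).filter fun k => (k < i ∧ u < permVal π k) ∧ v < permVal π k)
      = (Finset.range n).filter fun k => k < i ∧ v < permVal π k := by
    ext k
    simp only [Finset.mem_filter, Finset.mem_range]
    constructor
    · rintro ⟨hk, ⟨h1, h2⟩, h3⟩
      exact ⟨hk, h1, h3⟩
    · rintro ⟨hk, h1, h3⟩
      exact ⟨hk, ⟨h1, by omega⟩, h3⟩
  rw [hA] at hsplit
  -- the middle part has size at most v - u - 1
  have hmid : ((Finset.range n).filter fun k =>
      (k < i ∧ u < permVal π k) ∧ permVal π k ≤ v).card ≤ v - u - 1 := by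
    rw [show v - u - 1 = (Finset.Ioo u v).card from by rw [Nat.card_Ioo]]
    apply Finset.card_le_card_of_injOn (fun k => permVal π k)
    · intro k hk
      rw [Finset.mem_coe, Finset.mem_filter, Finset.mem_range] at hk
      obtain ⟨hk1, ⟨hk2, hk3⟩, hk4⟩ := hk
      simp only [Finset.mem_coe, Finset.mem_Ioo]
      have hne := hvnot k hk2
      omega
    · intro a ha b hb hab
      rw [Finset.mem_coe, Finset.mem_filter, Finset.mem_range] at ha hb
      exact pv_inj π ha.1 hb.1 hab
  omega

lemma code_injective (π σ : Equiv.Perm (Fin n)) (h : codeF π = codeF σ) : π = σ := by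
  -- prove values agree by strong induction on position
  have key : ∀ i, i < n → permVal π i = permVal σ i := by
    intro i
    induction i using Nat.strong_induction_on with
    | _ i ih =>
      intro hi
      have hpre : ∀ k, k < i → permVal π k = permVal σ k := fun k hk =>
        ih k hk (by omega)
      have h1 := code_identity π hi
      have h2 := code_identity σ hi
      have hfe : ∀ w : ℕ, ((Finset.range n).filter fun k => k < i ∧ w < permVal σ k)
          = (Finset.range n).filter fun k => k < i ∧ w < permVal π k := by
        intro w
        apply Finset.filter_congr
        intro k _
        constructor
        · rintro ⟨hk1, hk2⟩
          exact ⟨hk1, by rw [hpre k hk1]; exact hk2⟩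
        · rintro ⟨hk1, hk2⟩
          exact ⟨hk1, by rw [← hpre k hk1]; exact hk2⟩
      rw [hfe] at h2
      rw [← h] at h2
      -- now : codeF π i + A(pv π i) + pv π i = n = codeF π i + A(pv σ i) + pv σ i
      set u := permVal π i with hu
      set v := permVal σ i with hv
      have hun : u < n := pv_lt π hi
      have hvn : v < n := pv_lt σ hi
      rcases Nat.lt_trichotomy u v with hlt | heq | hgt
      · exfalso
        have hvnot : ∀ k, k < i → permVal π k ≠ v := by
          intro k hk hne
          rw [hpre k hk] at hne
          have := pv_inj σ (by omega) hi hne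
          omega
        have := code_strict π (i := i) hun hvn hlt hvnot
        omega
      · exact heq
      · exfalso
        have hvnot : ∀ k, k < i → permVal π k ≠ u := by
          intro k hk hne
          have := pv_inj π (by omega) hi hne
          omega
        have := code_strict π (i := i) hvn hun hgt hvnot
        omega
  apply Equiv.ext
  intro x
  have hx := key (x : ℕ) x.isLt
  rw [permVal, permVal, dif_pos x.isLt, dif_pos x.isLt] at hx
  have : (⟨(x : ℕ), x.isLt⟩ : Fin n) = x := by apply Fin.ext; rfl
  rw [this] at hx
  exact Fin.ext hx

end inj

lemma card_wd (n : ℕ) : (wd n).card = n.factorial := by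
  rw [wd, Finset.card_map, Fintype.card_piFinset]
  have : ∀ j : Fin n, (Finset.Icc 1 (n - (j : ℕ))).card = n - (j : ℕ) := by
    intro j
    rw [Nat.card_Icc]; omega
  rw [Finset.prod_congr rfl (fun j _ => this j)]
  clear this
  induction n with
  | zero => simp
  | succ n ih =>
    rw [Fin.prod_univ_succ]
    simp only [Fin.val_zero, Nat.sub_zero, Fin.val_succ]
    have : ∀ j : Fin n, n + 1 - ((j : ℕ) + 1) = n - (j : ℕ) := by intro j; omega
    rw [Finset.prod_congr rfl (fun j _ => this j), ih, Nat.factorial_succ]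

lemma count_transfer (n : ℕ) (hn : 1 ≤ n) :
    ((Finset.univ : Finset (Equiv.Perm (Fin n))).filter fun π =>
      occ12_3 π = 1 ∧ occ13_2 π = 1).card
      = ((wd n).filter fun w => stU n w = 1 ∧ stV n w = 1).card := by
  classical
  have hinj : Function.Injective (fun π : Equiv.Perm (Fin n) => codeF π) :=
    fun π σ h => code_injective π σ h
  have himg : (Finset.univ : Finset (Equiv.Perm (Fin n))).image (fun π => codeF π) = wd n := by
    apply Finset.eq_of_subset_of_card_le
    · intro w hw
      rw [Finset.mem_image] at hw
      obtain ⟨π, _, rfl⟩ := hw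
      exact code_mem π
    · rw [card_wd, Finset.card_image_of_injective _ hinj]
      simp [Fintype.card_perm]
  rw [← himg, Finset.filter_image, Finset.card_image_of_injective _ hinj]
  congr 1
  apply Finset.filter_congr
  intro π _
  rw [← occ12_eq π hn, ← occ13_eq π hn]

lemma acnt_eq (n : ℕ) (hn : 1 ≤ n) :
    ((wd n).filter fun w => stU n w = 1 ∧ stV n w = 1).card
      = cnt n 1 1 1 + cnt n 1 1 2 + cnt n 1 1 3 + cnt n 1 1 4 := by
  have H : ∀ w ∈ (wd n).filter (fun u => stU n u = 1 ∧ stV n u = 1),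
      w 0 ∈ Finset.Icc 1 n := by
    intro w hw
    rw [Finset.mem_filter] at hw
    have h2 := (mem_wd.1 hw.1).1 0 hn
    rw [Nat.sub_zero] at h2
    exact Finset.mem_Icc.2 h2
  rw [Finset.card_eq_sum_card_fiberwise H]
  have hfib : ∀ s, (((wd n).filter fun u => stU n u = 1 ∧ stV n u = 1).filter
      fun w => w 0 = s).card = cnt n 1 1 s := by
    intro s
    rw [Finset.filter_filter, cnt]
  rw [Finset.sum_congr rfl (fun s _ => hfib s)]
  exact sum_trunc n _ (fun s hs => cnt_zero_big (by omega))

end aux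

theorem stmt19 (n : ℕ) (hn : 1 ≤ n) :
    ((Finset.univ.filter (fun π : Equiv.Perm (Fin n) =>
      occ12_3 π = 1 ∧ occ13_2 π = 1)).card : ℚ) =
      ((n : ℚ) ^ 2 - 7 * (n : ℚ) + 14) * (2 : ℚ) ^ ((n : ℤ) - 3) - 2 := by
  by_cases h3 : 3 ≤ n
  · obtain ⟨k, rfl⟩ : ∃ k, n = k + 3 := ⟨n - 3, by omega⟩
    rw [count_transfer (k + 3) (by omega), acnt_eq (k + 3) (by omega)]
    obtain ⟨q1, q2, y1, y2, u3, z1, z2, v3, x1, x2, e3, e4⟩ := closed_forms k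
    push_cast
    rw [x1, x2, e3, e4]
    have hzp : (2 : ℚ) ^ ((k : ℤ) + 3 - 3) = (2 : ℚ) ^ (k : ℕ) := by
      rw [show (k : ℤ) + 3 - 3 = (k : ℤ) by ring, zpow_natCast]
    rw [hzp]
    field_simp
    ring
  · interval_cases n
    · have h : (Finset.univ.filter (fun π : Equiv.Perm (Fin 1) =>
          occ12_3 π = 1 ∧ occ13_2 π = 1)).card = 0 := by decide
      rw [h]
      have h2 : ((1 : ℕ) : ℤ) - 3 = -2 := by norm_num
      rw [h2]
      norm_num
    · have h : (Finset.univ.filter (fun π : Equiv.Perm (Fin 2) =>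
          occ12_3 π = 1 ∧ occ13_2 π = 1)).card = 0 := by decide
      rw [h]
      have h2 : ((2 : ℕ) : ℤ) - 3 = -1 := by norm_num
      rw [h2]
      norm_num
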